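/- Three vectors v₁ = (a₁, a₂), v₂ = (b₁, b₂), v₃ = (c₁, c₂) in ℝ² ⊂ ℂ² do conjugate phase retrieval in ℂ² (i.e., |⟨x, vⱼ⟩| = |⟨y, vⱼ⟩| for j = 1,2,3 implies x = e^{iθ}y or x = e^{iθ}·conj(y)) if and only if the 3×3 determinant det[[a₁², 2a₁a₂, a₂²], [b₁², 2b₁b₂, b₂²], [c₁², 2c₁c₂, c₂²]] is nonzero. -/

import Mathlib

noncomputable section
open MeasureTheory Complex Filter Topology

/-- `f` has exponential type at most `γ`. -/
def ExpType (γ : ℝ) (f : ℂ → ℂ) : Prop :=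
  ∀ ε > 0, ∃ C > 0, ∀ z : ℂ, ‖f z‖ ≤ C * Real.exp ((γ + ε) * ‖z‖)

/-- The Paley-Wiener space `PW_γ`: entire functions of exponential type at most `γ`
whose restriction to the real line is square integrable. -/
def IsPW (γ : ℝ) (f : ℂ → ℂ) : Prop :=
  Differentiable ℂ f ∧ ExpType γ f ∧ Integrable (fun x : ℝ => ‖f x‖ ^ 2)

/-- `f^♯(z) = conj (f (conj z))`. -/
def sharp (f : ℂ → ℂ) : ℂ → ℂ := fun z => (starRingEnd ℂ) (f ((starRingEnd ℂ) z))

/-- The (lower) Beurling density of `X` is strictly greater than `c`. -/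
def hasDensityGT (X : Set ℝ) (c : ℝ) : Prop :=
  ∃ d : ℝ, c < d ∧ ∃ H : ℝ, ∀ h ≥ H, ∀ x : ℝ, d * h ≤ ((X ∩ Set.Icc x (x + h)).ncard : ℝ)

/-- `t` is a set of sampling for `PW_γ`: frame inequalities hold. -/
def IsSamplingSet (γ : ℝ) (t : ℤ → ℝ) : Prop :=
  ∃ A B : ℝ, 0 < A ∧ 0 < B ∧ ∀ f : ℂ → ℂ, IsPW γ f →
    (A * ∫ x : ℝ, ‖f x‖ ^ 2 ≤ ∑' n : ℤ, ‖f (t n)‖ ^ 2) ∧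
    (∑' n : ℤ, ‖f (t n)‖ ^ 2 ≤ B * ∫ x : ℝ, ‖f x‖ ^ 2)


private lemma expand_normSq' (x0 x1 : ℂ) (a b : ℝ) :
    Complex.normSq (x0 * a + x1 * b)
      = a^2 * Complex.normSq x0 + 2*a*b*(x0 * (starRingEnd ℂ) x1).re + b^2 * Complex.normSq x1 := by
  simp [Complex.normSq_apply, Complex.mul_re, Complex.mul_im, Complex.add_re, Complex.add_im]
  ring

private lemma exists_phase' (z w : ℂ) (h : ‖z‖ = ‖w‖) :
    ∃ θ : ℝ, z = Complex.exp (θ * Complex.I) * w := by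
  rcases eq_or_ne w 0 with rfl | hw
  · exact ⟨0, by simpa using norm_eq_zero.mp (by simpa using h)⟩
  · have hz := Complex.norm_mul_exp_arg_mul_I z
    have hw' := Complex.norm_mul_exp_arg_mul_I w
    have habs : ‖z‖ = ‖w‖ := by
      simpa using h
    set α := z.arg with hα
    set β := w.arg with hβ
    refine ⟨α - β, ?_⟩
    rw [← hz, ← hw', habs, mul_left_comm, ← Complex.exp_add]
    congr 2
    push_cast
    ring

private lemma eq_or_conj_of' (z w : ℂ) (habs : ‖z‖ = ‖w‖)
    (hre : z.re = w.re) : z = w ∨ z = (starRingEnd ℂ) w := by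
  have h2 : z.re^2 + z.im^2 = w.re^2 + w.im^2 := by
    have : Complex.normSq z = Complex.normSq w := by
      rw [← Complex.sq_norm, ← Complex.sq_norm, habs]
    simpa [Complex.normSq_apply, sq] using this
  have him : (z.im - w.im) * (z.im + w.im) = 0 := by
    linear_combination h2 - (z.re + w.re) * hre
  rcases mul_eq_zero.mp him with h | h
  · left; exact Complex.ext hre (by linarith [sub_eq_zero.mp h])
  · right; exact Complex.ext (by simpa using hre) (by simp; linarith)

private lemma normSq_exp' (θ : ℝ) : Complex.normSq (Complex.exp ((θ:ℂ) * Complex.I)) = 1 := by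
  rw [← Complex.sq_norm, Complex.norm_exp_ofReal_mul_I]; norm_num

private lemma exp_mul_conj_exp' (θ : ℝ) :
    Complex.exp ((θ:ℂ) * Complex.I) * (starRingEnd ℂ) (Complex.exp ((θ:ℂ) * Complex.I)) = 1 := by
  rw [Complex.mul_conj, normSq_exp']; norm_num

private lemma cpr_core' (x0 x1 y0 y1 : ℂ) (h0 : ‖x0‖ = ‖y0‖) (h1 : ‖x1‖ = ‖y1‖)
    (hre : (x0 * (starRingEnd ℂ) x1).re = (y0 * (starRingEnd ℂ) y1).re) :
    ∃ θ : ℝ, (x0 = Complex.exp (θ * Complex.I) * y0 ∧ x1 = Complex.exp (θ * Complex.I) * y1) ∨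
      (x0 = Complex.exp (θ * Complex.I) * (starRingEnd ℂ) y0 ∧
       x1 = Complex.exp (θ * Complex.I) * (starRingEnd ℂ) y1) := by
  rcases eq_or_ne y0 0 with rfl | hy0
  · have hx0 : x0 = 0 := norm_eq_zero.mp (by simpa using h0)
    obtain ⟨θ, hθ⟩ := exists_phase' x1 y1 h1
    exact ⟨θ, Or.inl ⟨by simp [hx0], hθ⟩⟩
  rcases eq_or_ne y1 0 with rfl | hy1
  · have hx1 : x1 = 0 := norm_eq_zero.mp (by simpa using h1)
    obtain ⟨θ, hθ⟩ := exists_phase' x0 y0 h0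
    exact ⟨θ, Or.inl ⟨hθ, by simp [hx1]⟩⟩
  have habs : ‖x0 * (starRingEnd ℂ) x1‖ = ‖y0 * (starRingEnd ℂ) y1‖ := by
    simp only [norm_mul, Complex.norm_conj]
    rw [h0, h1]
  rcases eq_or_conj_of' _ _ habs hre with hcase | hcase
  · obtain ⟨θ, hθ⟩ := exists_phase' x0 y0 h0
    refine ⟨θ, Or.inl ⟨hθ, ?_⟩⟩
    rw [hθ] at hcase
    have hc : Complex.exp ((θ:ℂ) * Complex.I) * (starRingEnd ℂ) x1 = (starRingEnd ℂ) y1 := by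
      apply mul_left_cancel₀ hy0
      linear_combination hcase
    have hc' := congrArg (starRingEnd ℂ) hc
    simp only [map_mul, Complex.conj_conj] at hc'
    linear_combination Complex.exp ((θ:ℂ) * Complex.I) * hc' - x1 * exp_mul_conj_exp' θ
  · simp only [map_mul, Complex.conj_conj] at hcase
    have h0' : ‖x0‖ = ‖(starRingEnd ℂ) y0‖ := by
      rw [h0]; simp [Complex.norm_conj]
    obtain ⟨θ, hθ⟩ := exists_phase' x0 ((starRingEnd ℂ) y0) h0'
    refine ⟨θ, Or.inr ⟨hθ, ?_⟩⟩
    rw [hθ] at hcase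
    have hy0' : (starRingEnd ℂ) y0 ≠ 0 := by simpa using hy0
    have hc : Complex.exp ((θ:ℂ) * Complex.I) * (starRingEnd ℂ) x1 = y1 := by
      apply mul_left_cancel₀ hy0'
      linear_combination hcase
    have hc' := congrArg (starRingEnd ℂ) hc
    simp only [map_mul, Complex.conj_conj] at hc'
    linear_combination Complex.exp ((θ:ℂ) * Complex.I) * hc' - x1 * exp_mul_conj_exp' θ

private lemma moments_eq' (x0 x1 y0 y1 : ℂ) (θ : ℝ)
    (h : (x0 = Complex.exp (θ * Complex.I) * y0 ∧ x1 = Complex.exp (θ * Complex.I) * y1) ∨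
      (x0 = Complex.exp (θ * Complex.I) * (starRingEnd ℂ) y0 ∧
       x1 = Complex.exp (θ * Complex.I) * (starRingEnd ℂ) y1)) :
    Complex.normSq x0 = Complex.normSq y0 ∧ Complex.normSq x1 = Complex.normSq y1 ∧
      (x0 * (starRingEnd ℂ) x1).re = (y0 * (starRingEnd ℂ) y1).re := by
  rcases h with ⟨h0, h1⟩ | ⟨h0, h1⟩ <;> subst h0 <;> subst h1
  · refine ⟨by simp [Complex.normSq_mul, normSq_exp'],
      by simp [Complex.normSq_mul, normSq_exp'], ?_⟩
    have : Complex.exp ((θ:ℂ) * Complex.I) * y0 *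
        (starRingEnd ℂ) (Complex.exp ((θ:ℂ) * Complex.I) * y1) = y0 * (starRingEnd ℂ) y1 := by
      rw [map_mul]
      linear_combination (y0 * (starRingEnd ℂ) y1) * exp_mul_conj_exp' θ
    rw [this]
  · refine ⟨by simp [Complex.normSq_mul, normSq_exp', Complex.normSq_conj],
      by simp [Complex.normSq_mul, normSq_exp', Complex.normSq_conj], ?_⟩
    have : Complex.exp ((θ:ℂ) * Complex.I) * (starRingEnd ℂ) y0 *
        (starRingEnd ℂ) (Complex.exp ((θ:ℂ) * Complex.I) * (starRingEnd ℂ) y1)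
        = (starRingEnd ℂ) (y0 * (starRingEnd ℂ) y1) := by
      simp only [map_mul, Complex.conj_conj]
      linear_combination ((starRingEnd ℂ) y0 * y1) * exp_mul_conj_exp' θ
    rw [this, Complex.conj_re]

set_option maxHeartbeats 1000000 in
theorem cpr_two_dim_iff_det (a₁ a₂ b₁ b₂ c₁ c₂ : ℝ) :
    (∀ x y : Fin 2 → ℂ,
      ‖x 0 * (a₁ : ℂ) + x 1 * (a₂ : ℂ)‖ = ‖y 0 * (a₁ : ℂ) + y 1 * (a₂ : ℂ)‖ →
      ‖x 0 * (b₁ : ℂ) + x 1 * (b₂ : ℂ)‖ = ‖y 0 * (b₁ : ℂ) + y 1 * (b₂ : ℂ)‖ →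
      ‖x 0 * (c₁ : ℂ) + x 1 * (c₂ : ℂ)‖ = ‖y 0 * (c₁ : ℂ) + y 1 * (c₂ : ℂ)‖ →
      ∃ θ : ℝ, (∀ i, x i = Complex.exp (θ * Complex.I) * y i) ∨
        (∀ i, x i = Complex.exp (θ * Complex.I) * (starRingEnd ℂ) (y i)))
    ↔ Matrix.det !![a₁ ^ 2, 2 * a₁ * a₂, a₂ ^ 2;
                    b₁ ^ 2, 2 * b₁ * b₂, b₂ ^ 2;
                    c₁ ^ 2, 2 * c₁ * c₂, c₂ ^ 2] ≠ 0 := by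
  constructor
  · -- CPR implies det ≠ 0
    intro hcpr hdet0
    obtain ⟨k, hk, hker⟩ := Matrix.exists_mulVec_eq_zero_iff.mpr hdet0
    set u : ℝ := k 0 with hu'
    set v : ℝ := k 1 with hv'
    set w : ℝ := k 2 with hw'
    have ke : ∀ i : Fin 3, (Matrix.mulVec !![a₁ ^ 2, 2 * a₁ * a₂, a₂ ^ 2;
        b₁ ^ 2, 2 * b₁ * b₂, b₂ ^ 2; c₁ ^ 2, 2 * c₁ * c₂, c₂ ^ 2] k) i = 0 := by
      intro i; rw [hker]; rfl
    have ke1 : a₁^2 * u + 2*a₁*a₂ * v + a₂^2 * w = 0 := by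
      have := ke 0
      simp [Matrix.mulVec, dotProduct, Fin.sum_univ_three, hu', hv', hw'] at this
      linarith
    have ke2 : b₁^2 * u + 2*b₁*b₂ * v + b₂^2 * w = 0 := by
      have := ke 1
      simp [Matrix.mulVec, dotProduct, Fin.sum_univ_three, hu', hv', hw'] at this
      linarith
    have ke3 : c₁^2 * u + 2*c₁*c₂ * v + c₂^2 * w = 0 := by
      have := ke 2
      simp [Matrix.mulVec, dotProduct, Fin.sum_univ_three, hu', hv', hw'] at this
      linarith
    set P : ℝ := |u| + |w| + v^2 + 1 with hP'
    have hP1 : (1:ℝ) ≤ P + u := by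
      have := neg_abs_le u; have := abs_nonneg w; have := sq_nonneg v
      simp only [hP']; nlinarith
    have hP2 : (1:ℝ) ≤ P + w := by
      have := neg_abs_le w; have := abs_nonneg u; have := sq_nonneg v
      simp only [hP']; nlinarith
    have hPpos : (0:ℝ) ≤ P := by positivity
    have hkey : v^2 + 1 ≤ (P + u) * (P + w) := by
      have h1 : v^2 + 1 ≤ P + u := by
        have := neg_abs_le u; have := abs_nonneg w; simp only [hP']; nlinarith
      nlinarith
    set s : ℝ := Real.sqrt ((P + u) * (P + w) - v^2) with hs'
    set t : ℝ := Real.sqrt (P + u) with ht'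
    have hs2 : s^2 = (P + u) * (P + w) - v^2 := Real.sq_sqrt (by nlinarith)
    have ht2 : t^2 = P + u := Real.sq_sqrt (by linarith)
    have htpos : 0 < t := Real.sqrt_pos.mpr (by linarith)
    have htne : (t:ℂ) ≠ 0 := by exact_mod_cast Complex.ofReal_ne_zero.mpr (ne_of_gt htpos)
    set x : Fin 2 → ℂ := ![(Real.sqrt P : ℂ), (Real.sqrt P : ℂ) * Complex.I] with hx'
    set y : Fin 2 → ℂ := ![(t:ℂ), ((v:ℂ) + (s:ℂ) * Complex.I) / (t:ℂ)] with hy'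
    have mx0 : Complex.normSq (x 0) = P := by
      simp [hx', Complex.normSq_ofReal, Real.mul_self_sqrt hPpos]
    have mx1 : Complex.normSq (x 1) = P := by
      simp [hx', Complex.normSq_mul, Complex.normSq_ofReal, Real.mul_self_sqrt hPpos]
    have mxq : (x 0 * (starRingEnd ℂ) (x 1)).re = 0 := by
      simp [hx', map_mul, Complex.conj_I]
    have my0 : Complex.normSq (y 0) = P + u := by
      simp [hy', Complex.normSq_ofReal]
      nlinarith [ht2]
    have my1 : Complex.normSq (y 1) = P + w := by
      have : Complex.normSq (y 1) = ((v^2 + s^2) / (P + u)) := by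
        simp [hy', Complex.normSq_div, Complex.normSq_ofReal]
        rw [Complex.normSq_add_mul_I]
        rw [show t * t = P + u by nlinarith [ht2]]
      rw [this, hs2]
      have hne : P + u ≠ 0 := by linarith
      field_simp
      ring
    have myq : (y 0 * (starRingEnd ℂ) (y 1)).re = v := by
      have hy1 : y 0 * (starRingEnd ℂ) (y 1) = (v:ℂ) - (s:ℂ) * Complex.I := by
        simp only [hy']
        rw [show (![(t:ℂ), ((v:ℂ) + (s:ℂ) * Complex.I) / (t:ℂ)] : Fin 2 → ℂ) 0 = (t:ℂ) from rfl,
          show (![(t:ℂ), ((v:ℂ) + (s:ℂ) * Complex.I) / (t:ℂ)] : Fin 2 → ℂ) 1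
            = ((v:ℂ) + (s:ℂ) * Complex.I) / (t:ℂ) from rfl]
        rw [map_div₀]
        simp only [map_add, map_mul, Complex.conj_ofReal, Complex.conj_I]
        field_simp
        ring
      rw [hy1]
      simp
    have norm_of_sq : ∀ zz ww : ℂ, Complex.normSq zz = Complex.normSq ww → ‖zz‖ = ‖ww‖ := by
      intro zz ww h
      rw [Complex.norm_def, Complex.norm_def, h]
    have m1 : ‖x 0 * (a₁ : ℂ) + x 1 * (a₂ : ℂ)‖ = ‖y 0 * (a₁ : ℂ) + y 1 * (a₂ : ℂ)‖ := by
      apply norm_of_sq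
      rw [expand_normSq', expand_normSq', mx0, mx1, mxq, my0, my1, myq]
      linarith [ke1]
    have m2 : ‖x 0 * (b₁ : ℂ) + x 1 * (b₂ : ℂ)‖ = ‖y 0 * (b₁ : ℂ) + y 1 * (b₂ : ℂ)‖ := by
      apply norm_of_sq
      rw [expand_normSq', expand_normSq', mx0, mx1, mxq, my0, my1, myq]
      linarith [ke2]
    have m3 : ‖x 0 * (c₁ : ℂ) + x 1 * (c₂ : ℂ)‖ = ‖y 0 * (c₁ : ℂ) + y 1 * (c₂ : ℂ)‖ := by
      apply norm_of_sq
      rw [expand_normSq', expand_normSq', mx0, mx1, mxq, my0, my1, myq]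
      linarith [ke3]
    obtain ⟨θ, hc⟩ := hcpr x y m1 m2 m3
    have hmom : Complex.normSq (x 0) = Complex.normSq (y 0) ∧
        Complex.normSq (x 1) = Complex.normSq (y 1) ∧
        (x 0 * (starRingEnd ℂ) (x 1)).re = (y 0 * (starRingEnd ℂ) (y 1)).re := by
      apply moments_eq' (x 0) (x 1) (y 0) (y 1) θ
      rcases hc with h | h
      · exact Or.inl ⟨h 0, h 1⟩
      · exact Or.inr ⟨h 0, h 1⟩
    obtain ⟨e0, e1, eqq⟩ := hmom
    rw [mx0, my0] at e0
    rw [mx1, my1] at e1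
    rw [mxq, myq] at eqq
    apply hk
    funext i
    fin_cases i
    · show k 0 = 0; rw [← hu']; linarith
    · show k 1 = 0; rw [← hv']; linarith
    · show k 2 = 0; rw [← hw']; linarith
  · -- det ≠ 0 implies CPR
    intro hdet x y h1 h2 h3
    set p : ℝ := Complex.normSq (x 0) - Complex.normSq (y 0) with hp'
    set q : ℝ := (x 0 * (starRingEnd ℂ) (x 1)).re - (y 0 * (starRingEnd ℂ) (y 1)).re with hq'
    set r : ℝ := Complex.normSq (x 1) - Complex.normSq (y 1) with hr'
    have sq_of : ∀ u v : ℂ, ‖u‖ = ‖v‖ → Complex.normSq u = Complex.normSq v := by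
      intro u v h
      rw [← Complex.sq_norm, ← Complex.sq_norm, h]
    have e1 := sq_of _ _ h1; rw [expand_normSq', expand_normSq'] at e1
    have e2 := sq_of _ _ h2; rw [expand_normSq', expand_normSq'] at e2
    have e3 := sq_of _ _ h3; rw [expand_normSq', expand_normSq'] at e3
    have e1' : a₁^2*p + 2*a₁*a₂*q + a₂^2*r = 0 := by rw [hp', hq', hr']; linarith
    have e2' : b₁^2*p + 2*b₁*b₂*q + b₂^2*r = 0 := by rw [hp', hq', hr']; linarith
    have e3' : c₁^2*p + 2*c₁*c₂*q + c₂^2*r = 0 := by rw [hp', hq', hr']; linarith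
    have hv : Matrix.mulVec !![a₁ ^ 2, 2 * a₁ * a₂, a₂ ^ 2;
                      b₁ ^ 2, 2 * b₁ * b₂, b₂ ^ 2;
                      c₁ ^ 2, 2 * c₁ * c₂, c₂ ^ 2] ![p, q, r] = 0 := by
      funext i
      fin_cases i <;>
        simp [Matrix.mulVec, dotProduct, Fin.sum_univ_three] <;>
        linarith [e1', e2', e3']
    have hzero : ![p, q, r] = 0 := by
      by_contra hne
      exact hdet (Matrix.exists_mulVec_eq_zero_iff.mp ⟨_, hne, hv⟩)
    have hp : p = 0 := by have := congrFun hzero 0; simpa using this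
    have hq : q = 0 := by have := congrFun hzero 1; simpa using this
    have hr : r = 0 := by have := congrFun hzero 2; simpa using this
    have n0 : ‖x 0‖ = ‖y 0‖ := by
      rw [Complex.norm_def, Complex.norm_def]
      congr 1; linarith [hp']
    have n1 : ‖x 1‖ = ‖y 1‖ := by
      rw [Complex.norm_def, Complex.norm_def]
      congr 1; linarith [hr']
    have nre : (x 0 * (starRingEnd ℂ) (x 1)).re = (y 0 * (starRingEnd ℂ) (y 1)).re := by
      linarith [hq']
    obtain ⟨θ, hc⟩ := cpr_core' (x 0) (x 1) (y 0) (y 1) n0 n1 nre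
    rcases hc with ⟨h0, h1'⟩ | ⟨h0, h1'⟩
    · exact ⟨θ, Or.inl fun i => by fin_cases i <;> assumption⟩
    · exact ⟨θ, Or.inr fun i => by fin_cases i <;> assumption⟩
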